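/- Let (G, L, c, r, e_r) be a rooted WRAP instance, F⃗ a non-shortenable directed WRAP solution, and S ⊆ L a nonempty link set such that the induced link intersection graph H[S] is connected. Let V(S) denote the set of vertices incident to a link of S. Then Drop_{F⃗}(S) = (⋃_{v ∈ V(S)} δ⁻_{F⃗}(v)) \ δ⁻_{F⃗}(lca(V(S))), where δ⁻_{F⃗}(v) is the set of directed links of F⃗ with head v and lca(V(S)) is the least common ancestor of V(S) in the arborescence (V, F⃗). -/

import Mathlib

/-!
Common definitions for the Weighted Ring Augmentation Problem (WRAP).

A rooted WRAP instance `(G, L, c, r, e_r)` has a ring graph `G` whose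
vertices we identify with `Fin n`, numbered `r = 0, 1, …, n-1` in the order
in which they appear along the path `(V, E \ {e_r})` starting at the root
`r = 0`.  Vertex `i` is to the left of `j` iff `i < j`.
-/

/-- An undirected link: an unordered pair of distinct vertices of the ring,
recorded via its left endpoint `lo` and its right endpoint `hi`. -/
structure Link (n : ℕ) where
  lo : Fin n
  hi : Fin n
  lo_lt_hi : lo < hi

instance {n : ℕ} : DecidableEq (Link n) := fun a b =>
  decidable_of_iff (a.lo = b.lo ∧ a.hi = b.hi) (by cases a; cases b; simp)

/-- A directed link: an ordered pair of distinct vertices. -/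
structure DLink (n : ℕ) where
  tail : Fin n
  head : Fin n
  ne : tail ≠ head

instance {n : ℕ} : DecidableEq (DLink n) := fun a b =>
  decidable_of_iff (a.tail = b.tail ∧ a.head = b.head) (by cases a; cases b; simp)

variable {n : ℕ}

/-- The underlying undirected link of a directed link. -/
def DLink.toLink (d : DLink n) : Link n :=
  ⟨min d.tail d.head, max d.tail d.head, min_lt_max.mpr d.ne⟩

/-- `ℓ` is incident to `v`. -/
def Link.Incident (ℓ : Link n) (v : Fin n) : Prop := ℓ.lo = v ∨ ℓ.hi = v

/-- The 2-cuts `C_G` of the ring: the nonempty intervals of consecutive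
vertices along the path `(V, E \ {e_r})` that do not contain the root `0`. -/
def IsCut [NeZero n] (C : Finset (Fin n)) : Prop :=
  ∃ a b : Fin n, 0 < a ∧ a ≤ b ∧ C = Finset.Icc a b

/-- `ℓ` has exactly one endpoint in `C`. -/
def crossesCut (ℓ : Link n) (C : Finset (Fin n)) : Prop :=
  (ℓ.lo ∈ C ∧ ℓ.hi ∉ C) ∨ (ℓ.lo ∉ C ∧ ℓ.hi ∈ C)

instance (ℓ : Link n) (C : Finset (Fin n)) : Decidable (crossesCut ℓ C) := by
  unfold crossesCut; infer_instance

/-- `δ_K(C)`: the links of `K` with exactly one endpoint in `C`. -/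
def cutLinks (K : Finset (Link n)) (C : Finset (Fin n)) : Finset (Link n) :=
  K.filter (fun ℓ => crossesCut ℓ C)

/-- An (undirected) WRAP solution: every 2-cut is covered by some link. -/
def IsSolution [NeZero n] (S : Finset (Link n)) : Prop :=
  ∀ C : Finset (Fin n), IsCut C → (cutLinks S C).Nonempty

/-- A directed link covers a 2-cut if it enters it. -/
def DCovers (d : DLink n) (C : Finset (Fin n)) : Prop := d.tail ∉ C ∧ d.head ∈ C

/-- A directed WRAP solution: every 2-cut is entered by some directed link. -/
def IsDirSolution [NeZero n] (F : Finset (DLink n)) : Prop :=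
  ∀ C : Finset (Fin n), IsCut C → ∃ d ∈ F, DCovers d C

/-- `d'` is a shortening of `d`: same head, and the tail of `d'` lies on the
unique path between the endpoints of `d` in `(V, E \ {e_r})`. -/
def IsShortening (d' d : DLink n) : Prop :=
  d'.head = d.head ∧ min d.tail d.head ≤ d'.tail ∧ d'.tail ≤ max d.tail d.head

/-- A non-shortenable directed WRAP solution: deleting any link, or replacing
any link by a strict shortening of it, destroys feasibility. -/
def NonShortenable [NeZero n] (F : Finset (DLink n)) : Prop :=
  IsDirSolution F ∧
    (∀ d ∈ F, ¬ IsDirSolution (F.erase d)) ∧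
    (∀ d ∈ F, ∀ d' : DLink n, IsShortening d' d → d' ≠ d →
      ¬ IsDirSolution (insert d' (F.erase d)))

/-- `d` is a shadow of the undirected link `ℓ`: a shortening of one of the two
orientations of `ℓ`. -/
def IsShadow (d : DLink n) (ℓ : Link n) : Prop :=
  (d.head = ℓ.lo ∨ d.head = ℓ.hi) ∧ ℓ.lo ≤ d.tail ∧ d.tail ≤ ℓ.hi

/-- `u` is a descendant of `v` in `(V, F)` (every vertex is a descendant of
itself). -/
def Descend (F : Finset (DLink n)) (v u : Fin n) : Prop :=
  Relation.ReflTransGen (fun a b => ∃ d ∈ F, d.tail = a ∧ d.head = b) v u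

/-- `u` is `v`-good: not a descendant of `v` in `(V, F)`. -/
def VGood (F : Finset (DLink n)) (v u : Fin n) : Prop := ¬ Descend F v u

/-- `w` is the least common ancestor of the vertex set `U` in `(V, F)`. -/
def IsLCA (F : Finset (DLink n)) (w : Fin n) (U : Set (Fin n)) : Prop :=
  (∀ u ∈ U, Descend F w u) ∧ ∀ x : Fin n, (∀ u ∈ U, Descend F x u) → Descend F x w

/-- `d = (u,v)` is responsible for the 2-cut `C`: it covers `C` and no
directed link of `F` on the `r`–`u` path in the arborescence `(V, F)`
(i.e. no link of `F` whose head is an ancestor of `u`) covers `C`. -/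
def Responsible [NeZero n] (F : Finset (DLink n)) (d : DLink n)
    (C : Finset (Fin n)) : Prop :=
  IsCut C ∧ DCovers d C ∧
    ∀ d' ∈ F, Descend F d'.head d.tail → ¬ DCovers d' C

/-- `Drop_F(K)`: directed links of `F` all of whose responsible cuts
are covered by `K`. -/
def Drop [NeZero n] (F : Finset (DLink n)) (K : Finset (Link n)) : Set (DLink n) :=
  {d | d ∈ F ∧ ∀ C : Finset (Fin n), Responsible F d C → (cutLinks K C).Nonempty}

/-- Two links are crossing: their endpoints interleave along the ring. -/
def Crossing (ℓ f : Link n) : Prop :=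
  (ℓ.lo < f.lo ∧ f.lo < ℓ.hi ∧ ℓ.hi < f.hi) ∨
  (f.lo < ℓ.lo ∧ ℓ.lo < f.hi ∧ f.hi < ℓ.hi)

/-- Two links intersect: they share an endpoint or cross. -/
def Intersects (ℓ f : Link n) : Prop :=
  (ℓ.lo = f.lo ∨ ℓ.lo = f.hi ∨ ℓ.hi = f.lo ∨ ℓ.hi = f.hi) ∨ Crossing ℓ f

/-- The vertex `u` is connected to the vertex `w` in the link intersection
graph `H[K]`: there is a path in `H[K]` from a link incident to `u` to a link
incident to `w`. -/
def ConnVert (K : Finset (Link n)) (u w : Fin n) : Prop :=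
  ∃ ℓ ∈ K, ∃ f ∈ K, ℓ.Incident u ∧ f.Incident w ∧
    Relation.ReflTransGen (fun a b => a ∈ K ∧ b ∈ K ∧ Intersects a b) ℓ f

/-- The link intersection graph `H[S]` is connected. -/
def ConnLinkSet (S : Finset (Link n)) : Prop :=
  ∀ ℓ ∈ S, ∀ f ∈ S,
    Relation.ReflTransGen (fun a b => a ∈ S ∧ b ∈ S ∧ Intersects a b) ℓ f

/-- `V(S)`: the vertices incident to a link of `S`. -/
def linkVerts (S : Finset (Link n)) : Set (Fin n) := {v | ∃ ℓ ∈ S, ℓ.Incident v}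

/-- A festoon order: the links (listed as `f 0, f 1, …`) form a path in the
link intersection graph visited in this order, with both left endpoints and
right endpoints strictly increasing. -/
def IsFestoonSeq {p : ℕ} (f : Fin p → Link n) : Prop :=
  (∀ i j : Fin p, i < j → (f i).lo < (f j).lo ∧ (f i).hi < (f j).hi) ∧
  (∀ i j : Fin p, (i : ℕ) + 1 = (j : ℕ) → Intersects (f i) (f j)) ∧
  (∀ i j : Fin p, (i : ℕ) + 1 < (j : ℕ) → ¬ Intersects (f i) (f j))

/-- A festoon: a nonempty link set admitting a festoon order. -/
def IsFestoon (X : Finset (Link n)) : Prop :=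
  ∃ p : ℕ, 0 < p ∧ ∃ f : Fin p → Link n,
    IsFestoonSeq f ∧ X = Finset.image f Finset.univ

/-- The festoon interval `I_X`: the interval from the leftmost endpoint of a
link of `X` to the rightmost endpoint of a link of `X`. -/
def festoonIval (X : Finset (Link n)) : Set (Fin n) :=
  {w | (∃ ℓ ∈ X, ℓ.lo ≤ w) ∧ ∃ ℓ ∈ X, w ≤ ℓ.hi}

/-- Two festoons are tangled: some link of one intersects some link of the
other. -/
def Tangled (X Y : Finset (Link n)) : Prop :=
  ∃ ℓ ∈ X, ∃ f ∈ Y, Intersects ℓ f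

/-- A laminar family of vertex sets: any two members are nested or disjoint. -/
def Laminar (𝓛 : Set (Finset (Fin n))) : Prop :=
  ∀ A ∈ 𝓛, ∀ B ∈ 𝓛, A ⊆ B ∨ B ⊆ A ∨ Disjoint A B

/-- An inclusion-wise maximal laminar subfamily of `C_G`. -/
def MaxLaminarCuts [NeZero n] (𝓛 : Set (Finset (Fin n))) : Prop :=
  (∀ C ∈ 𝓛, IsCut C) ∧ Laminar 𝓛 ∧
    ∀ C : Finset (Fin n), IsCut C → C ∉ 𝓛 → ¬ Laminar (insert C 𝓛)

/-- An `α`-thin link set. -/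
def IsThin [NeZero n] (α : ℕ) (K : Finset (Link n)) : Prop :=
  ∃ 𝓛 : Set (Finset (Fin n)), MaxLaminarCuts 𝓛 ∧ ∀ C ∈ 𝓛, (cutLinks K C).card ≤ α

/-- The set `𝒳` of festoons connects `v` to a `v`-good vertex. -/
def ConnectsToGood (F : Finset (DLink n)) (v : Fin n)
    (𝒳 : Finset (Finset (Link n))) : Prop :=
  ∃ w : Fin n, VGood F v w ∧ ConnVert (𝒳.biUnion id) v w

/-- The undirected graph obtained from a set of directed links by
disregarding orientations. -/
def undirGraph (F : Finset (DLink n)) : SimpleGraph (Fin n) where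
  Adj a b := ∃ d ∈ F, (d.tail = a ∧ d.head = b) ∨ (d.tail = b ∧ d.head = a)
  symm := by
    constructor
    rintro a b ⟨d, hd, h⟩
    exact ⟨d, hd, h.symm⟩
  loopless := by
    constructor
    rintro a ⟨d, hd, h⟩
    rcases h with ⟨h1, h2⟩ | ⟨h1, h2⟩ <;> exact d.ne (h1.trans h2.symm)

/-- A directed link going to the left along the ring. -/
def LeftGoing (d : DLink n) : Prop := d.head < d.tail

/-- A directed link going to the right along the ring. -/
def RightGoing (d : DLink n) : Prop := d.tail < d.head

section Lemmas

variable {n : ℕ}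

lemma zero_not_mem_of_cut [NeZero n] {C : Finset (Fin n)} (h : IsCut C) : (0 : Fin n) ∉ C := by
  obtain ⟨a, b, ha, hab, rfl⟩ := h
  simp only [Finset.mem_Icc, not_and]
  intro h0
  exact absurd h0 (not_le.mpr ha)

lemma head_ne_zero [NeZero n] {F : Finset (DLink n)} (hF : NonShortenable F)
    {d : DLink n} (hd : d ∈ F) : d.head ≠ 0 := by
  intro h0
  have hdel := hF.2.1 d hd
  simp only [IsDirSolution] at hdel
  push_neg at hdel
  obtain ⟨C, hC, hCov⟩ := hdel
  obtain ⟨e, he, heC⟩ := hF.1 C hC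
  have hne : e ≠ d := by
    intro h; subst h
    exact zero_not_mem_of_cut hC (h0 ▸ heC.2)
  exact hCov e (Finset.mem_erase.mpr ⟨hne, he⟩) heC

lemma exists_inlink [NeZero n] {F : Finset (DLink n)} (hF : NonShortenable F)
    {v : Fin n} (hv : v ≠ 0) : ∃ d ∈ F, d.head = v := by
  have hc : IsCut ({v} : Finset (Fin n)) := by
    refine ⟨v, v, ?_, le_refl _, by simp⟩
    exact (Fin.pos_iff_ne_zero' v).mpr hv
  obtain ⟨d, hd, hcov⟩ := hF.1 _ hc
  exact ⟨d, hd, by simpa using hcov.2⟩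

lemma private_cut [NeZero n] {F : Finset (DLink n)} (hF : NonShortenable F)
    {d : DLink n} (hd : d ∈ F) {s : Fin n}
    (h1 : min d.tail d.head ≤ s) (h2 : s ≤ max d.tail d.head) (h3 : s ≠ d.tail) :
    ∃ C : Finset (Fin n), IsCut C ∧ s ∈ C ∧ DCovers d C ∧ ∀ e ∈ F, DCovers e C → e = d := by
  by_cases hs : s = d.head
  · have hdel := hF.2.1 d hd
    simp only [IsDirSolution] at hdel
    push_neg at hdel
    obtain ⟨C, hC, hCov⟩ := hdel
    obtain ⟨e, he, heC⟩ := hF.1 C hC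
    have heq : e = d := by
      by_contra hne
      exact hCov e (Finset.mem_erase.mpr ⟨hne, he⟩) heC
    subst heq
    refine ⟨C, hC, by rw [hs]; exact heC.2, heC, fun e' he' hecov => ?_⟩
    by_contra hne
    exact hCov e' (Finset.mem_erase.mpr ⟨hne, he'⟩) hecov
  · have hrep := hF.2.2 d hd ⟨s, d.head, hs⟩ ⟨rfl, h1, h2⟩
      (fun h => h3 (congrArg DLink.tail h))
    simp only [IsDirSolution] at hrep
    push_neg at hrep
    obtain ⟨C, hC, hCov⟩ := hrep
    obtain ⟨e, he, heC⟩ := hF.1 C hC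
    have heq : e = d := by
      by_contra hne2
      exact hCov e (Finset.mem_insert.mpr (Or.inr (Finset.mem_erase.mpr ⟨hne2, he⟩))) heC
    subst heq
    have hd'C := hCov _ (Finset.mem_insert_self _ _)
    have hsC : s ∈ C := by
      by_contra hsc
      exact hd'C ⟨hsc, heC.2⟩
    refine ⟨C, hC, hsC, heC, fun e' he' hecov => ?_⟩
    by_contra hne2
    exact hCov e' (Finset.mem_insert.mpr (Or.inr (Finset.mem_erase.mpr ⟨hne2, he'⟩))) hecov

lemma head_private_cut [NeZero n] {F : Finset (DLink n)} (hF : NonShortenable F)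
    {d : DLink n} (hd : d ∈ F) :
    ∃ C : Finset (Fin n), IsCut C ∧ DCovers d C ∧ ∀ e ∈ F, DCovers e C → e = d := by
  obtain ⟨C, hC, _, h2, h3⟩ := private_cut hF hd (min_le_right _ _) (le_max_right _ _)
    (Ne.symm d.ne)
  exact ⟨C, hC, h2, h3⟩

lemma inlink_unique [NeZero n] {F : Finset (DLink n)} (hF : NonShortenable F)
    {d1 d2 : DLink n} (h1 : d1 ∈ F) (h2 : d2 ∈ F) (hh : d1.head = d2.head) : d1 = d2 := by
  by_contra hne
  obtain ⟨C1, hC1, hcov1, huniq1⟩ := head_private_cut hF h1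
  obtain ⟨C2, hC2, hcov2, huniq2⟩ := head_private_cut hF h2
  obtain ⟨a1, b1, ha1, hab1, rfl⟩ := hC1
  obtain ⟨a2, b2, ha2, hab2, rfl⟩ := hC2
  set v := d1.head with hv
  have hv1 : v ∈ Finset.Icc a1 b1 := hcov1.2
  have hv2 : v ∈ Finset.Icc a2 b2 := hh ▸ hcov2.2
  simp only [Finset.mem_Icc] at hv1 hv2
  -- union cut
  have hJ : IsCut (Finset.Icc (min a1 a2) (max b1 b2)) :=
    ⟨_, _, lt_min ha1 ha2,
      le_trans (le_trans (min_le_left _ _) (le_trans hv1.1 hv1.2)) (le_max_left _ _), rfl⟩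
  obtain ⟨e, he, hecov⟩ := hF.1 _ hJ
  have hh2 : e.head ∈ Finset.Icc (min a1 a2) (max b1 b2) := hecov.2
  have ht2 : e.tail ∉ Finset.Icc (min a1 a2) (max b1 b2) := hecov.1
  simp only [Finset.mem_Icc, not_and, not_le] at hh2 ht2
  have htail1 : e.tail ∉ Finset.Icc a1 b1 := by
    simp only [Finset.mem_Icc, not_and, not_le]
    intro hle
    exact lt_of_le_of_lt (le_max_left b1 b2) (ht2 (le_trans (min_le_left _ _) hle))
  have htail2 : e.tail ∉ Finset.Icc a2 b2 := by
    simp only [Finset.mem_Icc, not_and, not_le]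
    intro hle
    exact lt_of_le_of_lt (le_max_right b1 b2) (ht2 (le_trans (min_le_right _ _) hle))
  have hcase : e.head ∈ Finset.Icc a1 b1 ∨ e.head ∈ Finset.Icc a2 b2 := by
    simp only [Finset.mem_Icc]
    rcases le_total e.head v with hle | hle
    · rcases min_cases a1 a2 with ⟨hm, _⟩ | ⟨hm, _⟩
      · exact Or.inl ⟨hm ▸ hh2.1, le_trans hle hv1.2⟩
      · exact Or.inr ⟨hm ▸ hh2.1, le_trans hle hv2.2⟩
    · rcases max_cases b1 b2 with ⟨hm, _⟩ | ⟨hm, _⟩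
      · exact Or.inl ⟨le_trans hv1.1 hle, hm ▸ hh2.2⟩
      · exact Or.inr ⟨le_trans hv2.1 hle, hm ▸ hh2.2⟩
  rcases hcase with hin | hin
  · have he1 : e = d1 := huniq1 e he ⟨htail1, hin⟩
    subst he1
    -- e = d1 covers C2 as well: head v ∈ C2, tail ∉ C2
    exact hne (huniq2 e he ⟨htail2, Finset.mem_Icc.mpr hv2⟩)
  · have he2 : e = d2 := huniq2 e he ⟨htail2, hin⟩
    subst he2
    exact hne (huniq1 e he ⟨htail1, hh ▸ Finset.mem_Icc.mpr hv1⟩).symm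

end Lemmas

section Lemmas2

variable {n : ℕ}

lemma fin_val_min (a b : Fin n) : (min a b).val = min a.val b.val := by
  rcases le_total a b with h | h
  · rw [min_eq_left h, min_eq_left (Fin.le_def.mp h)]
  · rw [min_eq_right h, min_eq_right (Fin.le_def.mp h)]

lemma fin_val_max (a b : Fin n) : (max a b).val = max a.val b.val := by
  rcases le_total a b with h | h
  · rw [max_eq_right h, max_eq_right (Fin.le_def.mp h)]
  · rw [max_eq_left h, max_eq_left (Fin.le_def.mp h)]

lemma fin_pos_val [NeZero n] {a : Fin n} (h : a ≠ 0) : 0 < a.val := by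
  have := (Fin.pos_iff_ne_zero' a).mpr h
  rw [Fin.lt_def] at this
  simpa using this

lemma lemma_X [NeZero n] {F : Finset (DLink n)} (hF : NonShortenable F)
    {d1 d2 : DLink n} (h1 : d1 ∈ F) (h2 : d2 ∈ F)
    (haq : d1.head ≤ d2.tail) (hqu : d2.tail < d1.tail) (huy : d1.tail ≤ d2.head) :
    False := by
  have ha0 : 0 < d1.head.val := fin_pos_val (head_ne_zero hF h1)
  rw [Fin.le_def] at haq huy
  rw [Fin.lt_def] at hqu
  have hUn : d1.tail.val < n := d1.tail.isLt
  have hYn : d2.head.val < n := d2.head.isLt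
  have hs1n : d1.tail.val - 1 < n := by omega
  have hs2n : d2.tail.val + 1 < n := by omega
  -- private cut of d1 at s1 = u - 1
  obtain ⟨C, hC, hs1C, hcovC, huniqC⟩ := private_cut hF h1 (s := ⟨d1.tail.val - 1, hs1n⟩)
    (le_trans (min_le_right _ _) (Fin.le_def.mpr (by first | (simp; omega) | simp | omega)))
    (le_trans (Fin.le_def.mpr (by first | (simp; omega) | simp | omega)) (le_max_left _ _))
    (by intro h; have := congrArg Fin.val h; simp at this <;> omega)
  -- private cut of d2 at s2 = q + 1
  obtain ⟨E, hE, hs2E, hcovE, huniqE⟩ := private_cut hF h2 (s := ⟨d2.tail.val + 1, hs2n⟩)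
    (le_trans (min_le_left _ _) (Fin.le_def.mpr (by simp)))
    (le_trans (Fin.le_def.mpr (by first | (simp; omega) | simp | omega)) (le_max_right _ _))
    (by intro h; have := congrArg Fin.val h; simp at this)
  obtain ⟨α, β, hα, hαβ, rfl⟩ := hC
  obtain ⟨γ, δ, hγ, hγδ, rfl⟩ := hE
  -- extract val facts
  have hαa : α.val ≤ d1.head.val ∧ d1.head.val ≤ β.val := by
    have := Finset.mem_Icc.mp hcovC.2; exact ⟨Fin.le_def.mp this.1, Fin.le_def.mp this.2⟩
  have hs1C' : α.val ≤ d1.tail.val - 1 ∧ d1.tail.val - 1 ≤ β.val := by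
    have := Finset.mem_Icc.mp hs1C; exact ⟨Fin.le_def.mp this.1, Fin.le_def.mp this.2⟩
  have huC : ¬ (α.val ≤ d1.tail.val ∧ d1.tail.val ≤ β.val) := by
    intro h
    exact hcovC.1 (Finset.mem_Icc.mpr ⟨Fin.le_def.mpr h.1, Fin.le_def.mpr h.2⟩)
  have hβ : β.val = d1.tail.val - 1 := by omega
  have hγy : γ.val ≤ d2.head.val ∧ d2.head.val ≤ δ.val := by
    have := Finset.mem_Icc.mp hcovE.2; exact ⟨Fin.le_def.mp this.1, Fin.le_def.mp this.2⟩
  have hs2E' : γ.val ≤ d2.tail.val + 1 ∧ d2.tail.val + 1 ≤ δ.val := by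
    have := Finset.mem_Icc.mp hs2E; exact ⟨Fin.le_def.mp this.1, Fin.le_def.mp this.2⟩
  have hqE : ¬ (γ.val ≤ d2.tail.val ∧ d2.tail.val ≤ δ.val) := by
    intro h
    exact hcovE.1 (Finset.mem_Icc.mpr ⟨Fin.le_def.mpr h.1, Fin.le_def.mpr h.2⟩)
  have hγ' : γ.val = d2.tail.val + 1 := by omega
  have hα0 : 0 < α.val := by
    rw [Fin.lt_def] at hα; simpa using hα
  by_cases hcase : d2.tail.val + 1 ≤ d1.tail.val - 1
  · -- middle cut I = Icc γ β  (= [q+1, u-1])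
    have hI : IsCut (Finset.Icc γ β) := ⟨γ, β, hγ, Fin.le_def.mpr (by omega), rfl⟩
    obtain ⟨e, heF, hecov⟩ := hF.1 _ hI
    have hh := Finset.mem_Icc.mp hecov.2
    have hh' : γ.val ≤ e.head.val ∧ e.head.val ≤ β.val := ⟨Fin.le_def.mp hh.1, Fin.le_def.mp hh.2⟩
    have ht' : ¬ (γ.val ≤ e.tail.val ∧ e.tail.val ≤ β.val) := by
      intro h
      exact hecov.1 (Finset.mem_Icc.mpr ⟨Fin.le_def.mpr h.1, Fin.le_def.mpr h.2⟩)
    rcases (by omega : e.tail.val < γ.val ∨ β.val < e.tail.val) with hlt | hgt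
    · -- e covers E ⇒ e = d2 ⇒ head = y ∉ I
      have : e = d2 := by
        apply huniqE e heF
        constructor
        · intro hmem
          have := Finset.mem_Icc.mp hmem
          have := Fin.le_def.mp this.1
          omega
        · exact Finset.mem_Icc.mpr ⟨Fin.le_def.mpr (by omega), Fin.le_def.mpr (by omega)⟩
      rw [this] at hh'
      omega
    · -- e covers C ⇒ e = d1 ⇒ head = a ∉ I
      have : e = d1 := by
        apply huniqC e heF
        constructor
        · intro hmem
          have := Finset.mem_Icc.mp hmem
          have := Fin.le_def.mp this.2
          omega
        · exact Finset.mem_Icc.mpr ⟨Fin.le_def.mpr (by omega), Fin.le_def.mpr (by omega)⟩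
      rw [this] at hh'
      omega
  · -- q + 1 = u : union cut J = Icc α δ
    have hqu1 : d2.tail.val + 1 = d1.tail.val := by omega
    have hJ : IsCut (Finset.Icc α δ) := ⟨α, δ, hα, Fin.le_def.mpr (by omega), rfl⟩
    obtain ⟨e, heF, hecov⟩ := hF.1 _ hJ
    have hh := Finset.mem_Icc.mp hecov.2
    have hh' : α.val ≤ e.head.val ∧ e.head.val ≤ δ.val := ⟨Fin.le_def.mp hh.1, Fin.le_def.mp hh.2⟩
    have ht' : ¬ (α.val ≤ e.tail.val ∧ e.tail.val ≤ δ.val) := by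
      intro h
      exact hecov.1 (Finset.mem_Icc.mpr ⟨Fin.le_def.mpr h.1, Fin.le_def.mpr h.2⟩)
    rcases (by omega : e.head.val ≤ d1.tail.val - 1 ∨ d2.tail.val + 1 ≤ e.head.val) with hside | hside
    · -- e covers C ⇒ e = d1 ⇒ tail = u ∈ J, contra
      have : e = d1 := by
        apply huniqC e heF
        constructor
        · intro hmem
          have := Finset.mem_Icc.mp hmem
          have h1' := Fin.le_def.mp this.1
          have h2' := Fin.le_def.mp this.2
          omega
        · exact Finset.mem_Icc.mpr ⟨Fin.le_def.mpr (by omega), Fin.le_def.mpr (by omega)⟩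
      rw [this] at ht'
      omega
    · -- e covers E ⇒ e = d2 ⇒ tail = q ∈ J, contra
      have : e = d2 := by
        apply huniqE e heF
        constructor
        · intro hmem
          have := Finset.mem_Icc.mp hmem
          have h1' := Fin.le_def.mp this.1
          have h2' := Fin.le_def.mp this.2
          omega
        · exact Finset.mem_Icc.mpr ⟨Fin.le_def.mpr (by omega), Fin.le_def.mpr (by omega)⟩
      rw [this] at ht'
      omega

lemma no_closed_finset [NeZero n] {F : Finset (DLink n)} (hF : NonShortenable F)
    (T : Finset (Fin n)) (hne : T.Nonempty) (h0 : (0 : Fin n) ∉ T)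
    (hclosed : ∀ x ∈ T, ∃ d ∈ F, d.head = x ∧ d.tail ∈ T) : False := by
  classical
  induction T using Finset.strongInduction with
  | _ T ih =>
    obtain ⟨a, haT, hamin⟩ := T.exists_min_image id hne
    obtain ⟨d, hdF, hdh, hdt⟩ := hclosed a haT
    have hau : a < d.tail := by
      refine lt_of_le_of_ne (hamin _ hdt) ?_
      intro h
      exact d.ne (h ▸ hdh.symm)
    by_cases hex : ∃ y ∈ T, ∃ e ∈ F, e.head = y ∧ e.tail ∈ T ∧ d.tail ≤ y ∧ e.tail < d.tail
    · obtain ⟨y, hyT, e, heF, heh, het, hy1, hy2⟩ := hex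
      refine lemma_X hF hdF heF ?_ ?_ ?_
      · rw [hdh]; exact hamin _ het
      · exact hy2
      · rw [heh]; exact hy1
    · push_neg at hex
      have hsub : T.filter (fun x => d.tail ≤ x) ⊂ T := by
        refine Finset.filter_ssubset.mpr ⟨a, haT, ?_⟩
        exact not_le.mpr hau
      refine ih _ hsub ⟨d.tail, Finset.mem_filter.mpr ⟨hdt, le_refl _⟩⟩ ?_ ?_
      · intro hmem
        exact h0 (Finset.mem_filter.mp hmem).1
      · intro x hx
        obtain ⟨hxT, hxge⟩ := Finset.mem_filter.mp hx
        obtain ⟨e, heF, heh, het⟩ := hclosed x hxT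
        exact ⟨e, heF, heh, Finset.mem_filter.mpr ⟨het, hex x hxT e heF heh het hxge⟩⟩

lemma reach [NeZero n] {F : Finset (DLink n)} (hF : NonShortenable F) (v : Fin n) :
    Descend F 0 v := by
  classical
  by_contra hv
  refine no_closed_finset hF (Finset.univ.filter (fun z => ¬ Descend F 0 z))
    ⟨v, Finset.mem_filter.mpr ⟨Finset.mem_univ _, hv⟩⟩ ?_ ?_
  · intro h
    exact (Finset.mem_filter.mp h).2 Relation.ReflTransGen.refl
  · intro x hx
    have hx2 := (Finset.mem_filter.mp hx).2
    have hx0 : x ≠ 0 := by rintro rfl; exact hx2 Relation.ReflTransGen.refl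
    obtain ⟨d, hdF, hdh⟩ := exists_inlink hF hx0
    refine ⟨d, hdF, hdh, Finset.mem_filter.mpr ⟨Finset.mem_univ _, ?_⟩⟩
    intro hreach
    exact hx2 (hreach.tail ⟨d, hdF, rfl, hdh⟩)

lemma descend_zero [NeZero n] {F : Finset (DLink n)} (hF : NonShortenable F)
    {v : Fin n} (h : Descend F v 0) : v = 0 := by
  rcases Relation.ReflTransGen.cases_tail h with h' | ⟨m, _, e, heF, _, heh⟩
  · exact h'.symm
  · exact absurd heh (head_ne_zero hF heF)

lemma descend_to_tail [NeZero n] {F : Finset (DLink n)} (hF : NonShortenable F)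
    {x v : Fin n} (h : Descend F x v) (hne : x ≠ v) {d : DLink n} (hd : d ∈ F)
    (hdh : d.head = v) : Descend F x d.tail := by
  rcases Relation.ReflTransGen.cases_tail h with h' | ⟨m, hm, e, heF, het, heh⟩
  · exact absurd h'.symm hne
  · have he : e = d := inlink_unique hF heF hd (heh.trans hdh.symm)
    rw [← het, he] at hm
    exact hm

lemma descend_antisymm [NeZero n] {F : Finset (DLink n)} (hF : NonShortenable F)
    {x y : Fin n} (hxy : Descend F x y) (hyx : Descend F y x) : x = y := by
  classical
  by_contra hne
  have hx0 : x ≠ 0 := by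
    rintro rfl
    exact hne (descend_zero hF hyx).symm
  refine no_closed_finset hF
    (Finset.univ.filter (fun z => Descend F x z ∧ Descend F z x))
    ⟨x, Finset.mem_filter.mpr ⟨Finset.mem_univ _, Relation.ReflTransGen.refl,
      Relation.ReflTransGen.refl⟩⟩ ?_ ?_
  · intro h
    exact hx0 (descend_zero hF (Finset.mem_filter.mp h).2.1)
  · intro z hz
    obtain ⟨-, hz1, hz2⟩ := Finset.mem_filter.mp hz
    have hz0 : z ≠ 0 := by
      rintro rfl
      exact hx0 (descend_zero hF hz1)
    obtain ⟨d, hdF, hdh⟩ := exists_inlink hF hz0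
    refine ⟨d, hdF, hdh, Finset.mem_filter.mpr ⟨Finset.mem_univ _, ?_, ?_⟩⟩
    · by_cases hxz : x = z
      · have : Descend F y d.tail := descend_to_tail hF hyx (Ne.symm hne) hdF (hxz ▸ hdh)
        exact hxy.trans this
      · exact descend_to_tail hF hz1 hxz hdF hdh
    · exact Relation.ReflTransGen.head ⟨d, hdF, rfl, hdh⟩ hz2

lemma ancestors_comparable [NeZero n] {F : Finset (DLink n)} (hF : NonShortenable F)
    {v x : Fin n} (hx : Descend F x v) :
    ∀ y : Fin n, Descend F y v → Descend F x y ∨ Descend F y x := by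
  induction hx with
  | refl => exact fun y hy => Or.inr hy
  | @tail b c hxb hbc ih =>
    intro y hy
    rcases Relation.ReflTransGen.cases_tail hy with h' | ⟨m, hym, e, heF, het, heh⟩
    · rw [← h']
      exact Or.inl (hxb.tail hbc)
    · obtain ⟨d, hdF, hdt, hdh⟩ := hbc
      have : e = d := inlink_unique hF heF hdF (heh.trans hdh.symm)
      have hmb : m = b := by rw [← het, this, hdt]
      exact ih y (hmb ▸ hym)

lemma private_cut_desc [NeZero n] {F : Finset (DLink n)} (hF : NonShortenable F)
    {Q : Finset (Fin n)} (hQ : IsCut Q) {e : DLink n} (heF : e ∈ F)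
    (huniq : ∀ e' ∈ F, DCovers e' Q → e' = e) {τ : Fin n} (hτ : τ ∈ Q) :
    Descend F e.head τ := by
  have key : ∀ τ : Fin n, Descend F 0 τ → τ ∈ Q → Descend F e.head τ := by
    intro τ h0
    induction h0 with
    | refl => exact fun h => absurd h (zero_not_mem_of_cut hQ)
    | @tail b c hb hbc ih =>
      intro hcQ
      by_cases hbQ : b ∈ Q
      · exact (ih hbQ).tail hbc
      · obtain ⟨d, hdF, hdt, hdh⟩ := hbc
        have hde : d = e := huniq d hdF ⟨hdt ▸ hbQ, hdh ▸ hcQ⟩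
        rw [← hdh, hde]
        exact Relation.ReflTransGen.refl
  exact key τ (reach hF τ) hτ

lemma between_desc [NeZero n] {F : Finset (DLink n)} (hF : NonShortenable F)
    {d : DLink n} (hd : d ∈ F) {s : Fin n}
    (h1 : min d.tail d.head ≤ s) (h2 : s ≤ max d.tail d.head) (h3 : s ≠ d.tail) :
    Descend F d.head s := by
  obtain ⟨C, hC, hsC, hcov, huniq⟩ := private_cut hF hd h1 h2 h3
  exact private_cut_desc hF hC hd huniq hsC

lemma descend_ivt [NeZero n] {F : Finset (DLink n)} (hF : NonShortenable F)
    {x y : Fin n} (h : Descend F x y) {c : Fin n}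
    (h1 : min x y ≤ c) (h2 : c ≤ max x y) : Descend F x c := by
  have key : ∀ y : Fin n, Descend F x y → ∀ c : Fin n,
      min x y ≤ c → c ≤ max x y → Descend F x c := by
    intro y h
    induction h with
    | refl =>
      intro c h1 h2
      simp only [min_self, max_self] at h1 h2
      rw [le_antisymm h2 h1]
      exact Relation.ReflTransGen.refl
    | @tail b z hb hbz ih =>
      intro c h1 h2
      rw [Fin.le_def, fin_val_min] at h1
      rw [Fin.le_def, fin_val_max] at h2
      by_cases hc : min x.val b.val ≤ c.val ∧ c.val ≤ max x.val b.val
      · exact ih c (by rw [Fin.le_def, fin_val_min]; exact hc.1)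
          (by rw [Fin.le_def, fin_val_max]; exact hc.2)
      · by_cases hcb : c = b
        · rw [hcb]; exact hb
        · obtain ⟨d, hdF, hdt, hdh⟩ := hbz
          have hcb' : c.val ≠ b.val := fun h => hcb (Fin.ext h)
          have hbetween : min b.val z.val ≤ c.val ∧ c.val ≤ max b.val z.val := by omega
          have hzc : Descend F z c := by
            rw [← hdh]
            refine between_desc hF hdF ?_ ?_ ?_
            · rw [Fin.le_def, fin_val_min, hdt, hdh]; exact hbetween.1
            · rw [Fin.le_def, fin_val_max, hdt, hdh]; exact hbetween.2
            · rw [hdt]; exact hcb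
          exact (hb.tail ⟨d, hdF, hdt, hdh⟩).trans hzc
  exact key y h c h1 h2

end Lemmas2

section Lemmas3

variable {n : ℕ}

lemma resp_anc_not_mem [NeZero n] {F : Finset (DLink n)} (hF : NonShortenable F)
    {d : DLink n} {C : Finset (Fin n)} (hresp : Responsible F d C)
    {ζ : Fin n} (hζ : Descend F ζ d.tail) : ζ ∉ C := by
  have key : ∀ ζ : Fin n, Descend F 0 ζ → Descend F ζ d.tail → ζ ∉ C := by
    intro ζ h0
    induction h0 with
    | refl => exact fun _ => zero_not_mem_of_cut hresp.1
    | @tail b c hb hbc ih =>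
      intro hdesc hcC
      have hbt : Descend F b d.tail := Relation.ReflTransGen.head hbc hdesc
      have hbC : b ∉ C := ih hbt
      obtain ⟨e, heF, het, heh⟩ := hbc
      refine hresp.2.2 e heF ?_ ⟨?_, ?_⟩
      · rw [heh]; exact hdesc
      · rw [het]; exact hbC
      · rw [heh]; exact hcC
  exact key ζ (reach hF ζ) hζ

lemma desc_interval_mem [NeZero n] {F : Finset (DLink n)} (hF : NonShortenable F)
    {z a b c : Fin n} (ha : Descend F z a) (hb : Descend F z b)
    (hac : a ≤ c) (hcb : c ≤ b) : Descend F z c := by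
  rcases le_total z c with h | h
  · exact descend_ivt hF hb (le_trans (min_le_left _ _) h) (le_trans hcb (le_max_right _ _))
  · exact descend_ivt hF ha (le_trans (min_le_right _ _) hac) (le_trans h (le_max_left _ _))

lemma lca_exists [NeZero n] {F : Finset (DLink n)} (hF : NonShortenable F)
    {U : Set (Fin n)} (hU : U.Nonempty) : ∃ w, IsLCA F w U := by
  classical
  obtain ⟨u0, hu0⟩ := hU
  set A : Finset (Fin n) := Finset.univ.filter (fun x => ∀ u ∈ U, Descend F x u) with hA
  have h0A : (0 : Fin n) ∈ A :=
    Finset.mem_filter.mpr ⟨Finset.mem_univ _, fun u _ => reach hF u⟩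
  obtain ⟨w, hwA, hwmax⟩ := A.exists_max_image
    (fun x => (Finset.univ.filter (fun ζ => Descend F ζ x)).card) ⟨0, h0A⟩
  have hwU : ∀ u ∈ U, Descend F w u := (Finset.mem_filter.mp hwA).2
  refine ⟨w, hwU, ?_⟩
  intro x hx
  have hxA : x ∈ A := Finset.mem_filter.mpr ⟨Finset.mem_univ _, hx⟩
  rcases ancestors_comparable hF (hx u0 hu0) w (hwU u0 hu0) with h | h
  · exact h
  · by_contra hxw
    have hstrict : (Finset.univ.filter (fun ζ => Descend F ζ w)).card <
        (Finset.univ.filter (fun ζ => Descend F ζ x)).card := by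
      apply Finset.card_lt_card
      rw [Finset.ssubset_def]
      constructor
      · intro ζ hζ
        exact Finset.mem_filter.mpr ⟨Finset.mem_univ _,
          ((Finset.mem_filter.mp hζ).2).trans h⟩
      · intro hsub
        have hx' : x ∈ Finset.univ.filter (fun ζ => Descend F ζ w) :=
          hsub (Finset.mem_filter.mpr ⟨Finset.mem_univ _, Relation.ReflTransGen.refl⟩)
        exact hxw (Finset.mem_filter.mp hx').2
    exact absurd (hwmax x hxA) (not_le.mpr hstrict)

lemma responsible_of_sub_desc [NeZero n] {F : Finset (DLink n)} (hF : NonShortenable F)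
    {d : DLink n} (hd : d ∈ F) {C : Finset (Fin n)}
    (hC : IsCut C) (hvC : d.head ∈ C) (hsub : ∀ x ∈ C, Descend F d.head x) :
    Responsible F d C := by
  have hstep : Descend F d.tail d.head := Relation.ReflTransGen.single ⟨d, hd, rfl, rfl⟩
  have htail : d.tail ∉ C := by
    intro ht
    exact d.ne (descend_antisymm hF hstep (hsub _ ht))
  refine ⟨hC, ⟨htail, hvC⟩, ?_⟩
  intro e heF hetail hecov
  have h1 : Descend F d.head e.head := hsub _ hecov.2
  have h2 : Descend F e.head d.head := hetail.trans hstep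
  have h3 : e.head = d.head := descend_antisymm hF h2 h1
  have h4 : Descend F d.head d.tail := h3 ▸ hetail
  exact d.ne (descend_antisymm hF hstep h4)

lemma responsible_sub_desc [NeZero n] {F : Finset (DLink n)} (hF : NonShortenable F)
    {d : DLink n} (hd : d ∈ F) {C : Finset (Fin n)}
    (hresp : Responsible F d C) : ∀ x ∈ C, Descend F d.head x := by
  classical
  by_contra hbad
  push_neg at hbad
  obtain ⟨x0, hx0C, hx0⟩ := hbad
  obtain ⟨α, β, hα, hαβ, hCeq⟩ := hresp.1
  set v := d.head with hv
  have hv0 : v ≠ 0 := head_ne_zero hF hd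
  set D : Finset (Fin n) := Finset.univ.filter (fun z => Descend F v z) with hD
  have hvD : v ∈ D := Finset.mem_filter.mpr ⟨Finset.mem_univ _, Relation.ReflTransGen.refl⟩
  have hDne : D.Nonempty := ⟨v, hvD⟩
  set m := D.min' hDne with hm
  set M := D.max' hDne with hM
  have hmDesc : Descend F v m := (Finset.mem_filter.mp (D.min'_mem hDne)).2
  have hMDesc : Descend F v M := (Finset.mem_filter.mp (D.max'_mem hDne)).2
  have hmem_desc : ∀ c : Fin n, m ≤ c → c ≤ M → Descend F v c :=
    fun c h1 h2 => desc_interval_mem hF hmDesc hMDesc h1 h2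
  have hdesc_mem : ∀ c : Fin n, Descend F v c → (m ≤ c ∧ c ≤ M) := by
    intro c hc
    have hcD : c ∈ D := Finset.mem_filter.mpr ⟨Finset.mem_univ _, hc⟩
    exact ⟨D.min'_le _ hcD, D.le_max' _ hcD⟩
  have hvm : m ≤ v := (hdesc_mem v Relation.ReflTransGen.refl).1
  have hvM : v ≤ M := (hdesc_mem v Relation.ReflTransGen.refl).2
  have hvC : v ∈ C := hresp.2.1.2
  have hvC' : α ≤ v ∧ v ≤ β := Finset.mem_Icc.mp (hCeq ▸ hvC)
  have hx0C' : α ≤ x0 ∧ x0 ≤ β := Finset.mem_Icc.mp (hCeq ▸ hx0C)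
  have hm0 : 0 < m.val := by
    rcases Nat.eq_zero_or_pos m.val with h | h
    · exact absurd (descend_zero hF (show Descend F v 0 from (Fin.ext h : m = 0) ▸ hmDesc)) hv0
    · exact h
  have hx0out : x0.val < m.val ∨ M.val < x0.val := by
    by_contra hcon
    push_neg at hcon
    exact hx0 (hmem_desc x0 (Fin.le_def.mpr hcon.1) (Fin.le_def.mpr hcon.2))
  -- the boundary witness x
  have hxgen : ∀ x : Fin n, x ∈ C → ¬ Descend F v x → ¬ Descend F x v := by
    intro x hxC hnd hdx
    have hne : x ≠ v := by rintro rfl; exact hnd Relation.ReflTransGen.refl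
    have := descend_to_tail hF hdx hne hd rfl
    exact (resp_anc_not_mem hF hresp this) hxC
  -- construct x on the appropriate side
  rcases hx0out with hleft | hright
  · -- x0 < m : take x = m - 1
    set x : Fin n := ⟨m.val - 1, by omega⟩ with hx
    have hxC : x ∈ C := by
      rw [hCeq]
      refine Finset.mem_Icc.mpr ⟨Fin.le_def.mpr ?_, Fin.le_def.mpr ?_⟩
      · have := Fin.le_def.mp hx0C'.1; simp only [hx]; omega
      · have := Fin.le_def.mp hvC'.2; have := Fin.le_def.mp hvm; simp only [hx]; omega
    have hxv : x.val < v.val := by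
      have := Fin.le_def.mp hvm; simp only [hx]; omega
    have hndx : ¬ Descend F v x := by
      intro h
      have := (hdesc_mem x h).1
      rw [Fin.le_def] at this
      simp only [hx] at this
      omega
    have hnxv : ¬ Descend F x v := hxgen x hxC hndx
    obtain ⟨z, hz1, hz2⟩ := lca_exists hF (U := {v, x}) ⟨v, by simp⟩
    have hzv : Descend F z v := hz1 v (by simp)
    have hzx : Descend F z x := hz1 x (by simp)
    have hzlow : ∀ ζ : Fin n, Descend F ζ v → Descend F ζ x → Descend F ζ z := by
      intro ζ h1 h2
      exact hz2 ζ (by intro u hu; rcases hu with rfl | rfl; exacts [h1, h2])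
    have hzv' : z ≠ v := by rintro rfl; exact hndx hzx
    have hzx' : z ≠ x := by rintro rfl; exact hnxv hzv
    obtain ⟨k', hstepk, hk'v⟩ := (Relation.ReflTransGen.cases_head hzv).resolve_left hzv'
    obtain ⟨h', hsteph, hh'x⟩ := (Relation.ReflTransGen.cases_head hzx).resolve_left hzx'
    have hcommon : ∀ c : Fin n, Descend F z c → Descend F c v → Descend F c x → c = z := by
      intro c hzc hcv hcx
      exact (descend_antisymm hF hzc (hzlow c hcv hcx)).symm
    have hk'x : ¬ Descend F k' x := by
      intro h
      have := hcommon k' (Relation.ReflTransGen.single hstepk) hk'v h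
      obtain ⟨e, heF, het, heh⟩ := hstepk
      exact e.ne (het.trans (this.symm.trans heh.symm))
    have hh'v : ¬ Descend F h' v := by
      intro h
      have := hcommon h' (Relation.ReflTransGen.single hsteph) h hh'x
      obtain ⟨e, heF, het, heh⟩ := hsteph
      exact e.ne (het.trans (this.symm.trans heh.symm))
    -- k' subtree is ≥ m
    have hc1 : ∀ c : Fin n, Descend F k' c → m.val ≤ c.val := by
      intro c hc
      by_contra hlt
      push_neg at hlt
      exact hk'x (desc_interval_mem hF hc hk'v (Fin.le_def.mpr (by simp only [hx]; omega))
        (Fin.le_def.mpr (by simp only [hx]; omega)))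
    -- h' subtree is < m
    have hc2 : ∀ c : Fin n, Descend F h' c → c.val < m.val := by
      intro c hc
      by_contra hge
      push_neg at hge
      have hh'm : Descend F h' m := desc_interval_mem hF hh'x hc
        (Fin.le_def.mpr (by simp only [hx]; omega)) (Fin.le_def.mpr hge)
      rcases ancestors_comparable hF hmDesc h' hh'm with h | h
      · exact hndx (h.trans hh'x)
      · exact hh'v h
    have hzout : z.val < m.val ∨ M.val < z.val := by
      by_contra hcon
      push_neg at hcon
      have := hmem_desc z (Fin.le_def.mpr hcon.1) (Fin.le_def.mpr hcon.2)
      exact hzv' (descend_antisymm hF hzv this)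
    have hk'm : m.val ≤ k'.val := hc1 k' Relation.ReflTransGen.refl
    have hh'm : h'.val < m.val := hc2 h' Relation.ReflTransGen.refl
    rcases hzout with hzlt | hzgt
    · -- z < m : use link (z, k') with s = x
      obtain ⟨e, heF, het, heh⟩ := hstepk
      have hzx'' : z.val ≠ x.val := fun h => hzx' (Fin.ext h)
      have : Descend F k' x := by
        rw [← heh]
        refine between_desc hF heF ?_ ?_ ?_
        · rw [Fin.le_def, fin_val_min, het, heh]; simp only [hx]; omega
        · rw [Fin.le_def, fin_val_max, het, heh]; simp only [hx]; omega
        · rw [het]; exact fun h => hzx' h.symm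
      exact hk'x this
    · -- z > M : use link (z, h') with s = v
      obtain ⟨e, heF, het, heh⟩ := hsteph
      have hzv'' : z.val ≠ v.val := fun h => hzv' (Fin.ext h)
      have hvM' := Fin.le_def.mp hvM
      have : Descend F h' v := by
        rw [← heh]
        refine between_desc hF heF ?_ ?_ ?_
        · rw [Fin.le_def, fin_val_min, het, heh]; omega
        · rw [Fin.le_def, fin_val_max, het, heh]; omega
        · rw [het]; exact fun h => hzv' h.symm
      exact hh'v this
  · -- M < x0 : take x = M + 1
    have hMn : x0.val < n := x0.isLt
    set x : Fin n := ⟨M.val + 1, by omega⟩ with hx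
    have hxC : x ∈ C := by
      rw [hCeq]
      refine Finset.mem_Icc.mpr ⟨Fin.le_def.mpr ?_, Fin.le_def.mpr ?_⟩
      · have := Fin.le_def.mp hvC'.1; have := Fin.le_def.mp hvM; simp only [hx]; omega
      · have := Fin.le_def.mp hx0C'.2; simp only [hx]; omega
    have hxv : v.val < x.val := by
      have := Fin.le_def.mp hvM; simp only [hx]; omega
    have hndx : ¬ Descend F v x := by
      intro h
      have := (hdesc_mem x h).2
      rw [Fin.le_def] at this
      simp only [hx] at this
      omega
    have hnxv : ¬ Descend F x v := hxgen x hxC hndx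
    obtain ⟨z, hz1, hz2⟩ := lca_exists hF (U := {v, x}) ⟨v, by simp⟩
    have hzv : Descend F z v := hz1 v (by simp)
    have hzx : Descend F z x := hz1 x (by simp)
    have hzlow : ∀ ζ : Fin n, Descend F ζ v → Descend F ζ x → Descend F ζ z := by
      intro ζ h1 h2
      exact hz2 ζ (by intro u hu; rcases hu with rfl | rfl; exacts [h1, h2])
    have hzv' : z ≠ v := by rintro rfl; exact hndx hzx
    have hzx' : z ≠ x := by rintro rfl; exact hnxv hzv
    obtain ⟨k', hstepk, hk'v⟩ := (Relation.ReflTransGen.cases_head hzv).resolve_left hzv'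
    obtain ⟨h', hsteph, hh'x⟩ := (Relation.ReflTransGen.cases_head hzx).resolve_left hzx'
    have hcommon : ∀ c : Fin n, Descend F z c → Descend F c v → Descend F c x → c = z := by
      intro c hzc hcv hcx
      exact (descend_antisymm hF hzc (hzlow c hcv hcx)).symm
    have hk'x : ¬ Descend F k' x := by
      intro h
      have := hcommon k' (Relation.ReflTransGen.single hstepk) hk'v h
      obtain ⟨e, heF, het, heh⟩ := hstepk
      exact e.ne (het.trans (this.symm.trans heh.symm))
    have hh'v : ¬ Descend F h' v := by
      intro h
      have := hcommon h' (Relation.ReflTransGen.single hsteph) h hh'x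
      obtain ⟨e, heF, het, heh⟩ := hsteph
      exact e.ne (het.trans (this.symm.trans heh.symm))
    have hc1 : ∀ c : Fin n, Descend F k' c → c.val ≤ M.val := by
      intro c hc
      by_contra hgt
      push_neg at hgt
      exact hk'x (desc_interval_mem hF hk'v hc (Fin.le_def.mpr (by simp only [hx]; omega))
        (Fin.le_def.mpr (by simp only [hx]; omega)))
    have hc2 : ∀ c : Fin n, Descend F h' c → M.val < c.val := by
      intro c hc
      by_contra hle
      push_neg at hle
      have hh'M : Descend F h' M := desc_interval_mem hF hc hh'x
        (Fin.le_def.mpr hle) (Fin.le_def.mpr (by simp only [hx]; omega))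
      rcases ancestors_comparable hF hMDesc h' hh'M with h | h
      · exact hndx (h.trans hh'x)
      · exact hh'v h
    have hzout : z.val < m.val ∨ M.val < z.val := by
      by_contra hcon
      push_neg at hcon
      have := hmem_desc z (Fin.le_def.mpr hcon.1) (Fin.le_def.mpr hcon.2)
      exact hzv' (descend_antisymm hF hzv this)
    have hk'M : k'.val ≤ M.val := hc1 k' Relation.ReflTransGen.refl
    have hh'M : M.val < h'.val := hc2 h' Relation.ReflTransGen.refl
    have hvm' := Fin.le_def.mp hvm
    have hvM' := Fin.le_def.mp hvM
    rcases hzout with hzlt | hzgt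
    · -- z < m ≤ v : use link (z, h') with s = v
      obtain ⟨e, heF, het, heh⟩ := hsteph
      have : Descend F h' v := by
        rw [← heh]
        refine between_desc hF heF ?_ ?_ ?_
        · rw [Fin.le_def, fin_val_min, het, heh]; omega
        · rw [Fin.le_def, fin_val_max, het, heh]; omega
        · rw [het]; exact fun h => hzv' h.symm
      exact hh'v this
    · -- z > M : use link (z, k') with s = x
      obtain ⟨e, heF, het, heh⟩ := hstepk
      have hzxne : z.val ≠ x.val := fun h => hzx' (Fin.ext h)
      have : Descend F k' x := by
        rw [← heh]
        refine between_desc hF heF ?_ ?_ ?_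
        · rw [Fin.le_def, fin_val_min, het, heh]; simp only [hx]; omega
        · rw [Fin.le_def, fin_val_max, het, heh]; simp only [hx]; omega
        · rw [het]; exact fun h => hzx' h.symm
      exact hk'x this

end Lemmas3

/-- for a non-shortenable directed WRAP solution `F` and a
nonempty link set `S ⊆ L` whose link intersection graph `H[S]` is connected,
`Drop_F(S) = (⋃_{v ∈ V(S)} δ⁻_F(v)) \ δ⁻_F(lca(V(S)))`. -/
theorem drop_of_connected_set {n : ℕ}
    (L : Finset (Link (n + 3))) (c : Link (n + 3) → ℝ)
    (F : Finset (DLink (n + 3))) (hF : NonShortenable F)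
    (S : Finset (Link (n + 3))) (hSL : S ⊆ L) (hS : S.Nonempty)
    (hconn : ConnLinkSet S) :
    ∃ w : Fin (n + 3), IsLCA F w (linkVerts S) ∧
      Drop F S = {d : DLink (n + 3) | d ∈ F ∧ d.head ∈ linkVerts S} \
        {d : DLink (n + 3) | d ∈ F ∧ d.head = w} := by
  classical
  obtain ⟨ℓ0, hℓ0S⟩ := hS
  have hUne : (linkVerts S).Nonempty := ⟨ℓ0.lo, ℓ0, hℓ0S, Or.inl rfl⟩
  obtain ⟨w, hw⟩ := lca_exists hF hUne
  refine ⟨w, hw, ?_⟩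
  ext d
  simp only [Drop, Set.mem_setOf_eq, Set.mem_diff, not_and]
  constructor
  · rintro ⟨hdF, hdrop⟩
    set v := d.head with hv
    have hv0 : v ≠ 0 := head_ne_zero hF hdF
    have hvpos : (0 : Fin (n + 3)) < v := (Fin.pos_iff_ne_zero' v).mpr hv0
    -- (A) head ∈ V(S), using the singleton cut {v}
    have hvU : v ∈ linkVerts S := by
      by_contra hvU
      have hC : IsCut (Finset.Icc v v) := ⟨v, v, hvpos, le_refl _, rfl⟩
      have hresp : Responsible F d (Finset.Icc v v) := by
        refine responsible_of_sub_desc hF hdF hC (Finset.mem_Icc.mpr ⟨le_refl _, le_refl _⟩) ?_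
        intro x hx
        obtain ⟨h1, h2⟩ := Finset.mem_Icc.mp hx
        rw [le_antisymm h2 h1]
        exact Relation.ReflTransGen.refl
      obtain ⟨ℓ, hℓ⟩ := hdrop _ hresp
      obtain ⟨hℓS, hcross⟩ := Finset.mem_filter.mp hℓ
      rcases hcross with ⟨h1, -⟩ | ⟨-, h2⟩
      · obtain ⟨he1, he2⟩ := Finset.mem_Icc.mp h1
        exact hvU ⟨ℓ, hℓS, Or.inl (le_antisymm he2 he1)⟩
      · obtain ⟨he1, he2⟩ := Finset.mem_Icc.mp h2
        exact hvU ⟨ℓ, hℓS, Or.inr (le_antisymm he2 he1)⟩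
    refine ⟨⟨hdF, hvU⟩, ?_⟩
    -- (B) head ≠ w, using the full subtree cut
    intro _ hvw
    set D : Finset (Fin (n + 3)) := Finset.univ.filter (fun z => Descend F v z) with hD
    have hvD : v ∈ D := Finset.mem_filter.mpr ⟨Finset.mem_univ _, Relation.ReflTransGen.refl⟩
    have hDne : D.Nonempty := ⟨v, hvD⟩
    set m := D.min' hDne with hm
    set M := D.max' hDne with hM
    have hmDesc : Descend F v m := (Finset.mem_filter.mp (D.min'_mem hDne)).2
    have hMDesc : Descend F v M := (Finset.mem_filter.mp (D.max'_mem hDne)).2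
    have hdesc_mem : ∀ ξ : Fin (n + 3), Descend F v ξ → (m ≤ ξ ∧ ξ ≤ M) := by
      intro ξ hξ
      have hcD : ξ ∈ D := Finset.mem_filter.mpr ⟨Finset.mem_univ _, hξ⟩
      exact ⟨D.min'_le _ hcD, D.le_max' _ hcD⟩
    have hvm : m ≤ v := (hdesc_mem v Relation.ReflTransGen.refl).1
    have hvM : v ≤ M := (hdesc_mem v Relation.ReflTransGen.refl).2
    have hm0 : (0 : Fin (n + 3)) < m := by
      rcases Nat.eq_zero_or_pos m.val with h | h
      · exact absurd (descend_zero hF ((Fin.ext h : m = 0) ▸ hmDesc)) hv0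
      · rw [Fin.lt_def]; simpa using h
    have hC : IsCut (Finset.Icc m M) := ⟨m, M, hm0, le_trans hvm hvM, rfl⟩
    have hresp : Responsible F d (Finset.Icc m M) := by
      refine responsible_of_sub_desc hF hdF hC (Finset.mem_Icc.mpr ⟨hvm, hvM⟩) ?_
      intro x hx
      obtain ⟨h1, h2⟩ := Finset.mem_Icc.mp hx
      exact desc_interval_mem hF hmDesc hMDesc h1 h2
    obtain ⟨ℓ, hℓ⟩ := hdrop _ hresp
    obtain ⟨hℓS, hcross⟩ := Finset.mem_filter.mp hℓ
    have hmemU : ∀ u : Fin (n + 3), Link.Incident ℓ u → u ∈ Finset.Icc m M := by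
      intro u hu
      have huU : u ∈ linkVerts S := ⟨ℓ, hℓS, hu⟩
      have : Descend F v u := by
        rw [hvw]
        exact hw.1 u huU
      exact Finset.mem_Icc.mpr (hdesc_mem u this)
    rcases hcross with ⟨-, h2⟩ | ⟨h1, -⟩
    · exact h2 (hmemU _ (Or.inr rfl))
    · exact h1 (hmemU _ (Or.inl rfl))
  · rintro ⟨⟨hdF, hvU⟩, hnw⟩
    have hvw : d.head ≠ w := fun h => hnw hdF h
    refine ⟨hdF, ?_⟩
    intro C hresp
    rw [cutLinks, Finset.filter_nonempty_iff]
    by_contra hempty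
    push_neg at hempty
    obtain ⟨α, β, hα, hαβ, hCeq⟩ := hresp.1
    have hvC : d.head ∈ C := hresp.2.1.2
    have hiff : ∀ ℓ ∈ S, (ℓ.lo ∈ C ↔ ℓ.hi ∈ C) := by
      intro ℓ hℓ
      have := hempty ℓ hℓ
      simp only [crossesCut, not_or, not_and] at this
      constructor
      · intro h
        by_contra h2
        exact this.1 h h2
      · intro h
        by_contra h2
        exact (this.2 h2) h
    obtain ⟨ℓ1, hℓ1S, hinc1⟩ := hvU
    have hbase : ℓ1.lo ∈ C ∧ ℓ1.hi ∈ C := by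
      rcases hinc1 with h | h
      · have : ℓ1.lo ∈ C := h ▸ hvC
        exact ⟨this, (hiff ℓ1 hℓ1S).mp this⟩
      · have : ℓ1.hi ∈ C := h ▸ hvC
        exact ⟨(hiff ℓ1 hℓ1S).mpr this, this⟩
    have hchain : ∀ f : Link (n + 3),
        Relation.ReflTransGen (fun a b => a ∈ S ∧ b ∈ S ∧ Intersects a b) ℓ1 f →
        f.lo ∈ C ∧ f.hi ∈ C := by
      intro f hf
      induction hf with
      | refl => exact hbase
      | @tail g f' hg hstep ih =>
        obtain ⟨hgS, hf'S, hint⟩ := hstep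
        have hmemC : ∀ u : Fin (n + 3), α ≤ u → u ≤ β → u ∈ C := by
          intro u h1 h2
          rw [hCeq]
          exact Finset.mem_Icc.mpr ⟨h1, h2⟩
        have hglo := Finset.mem_Icc.mp (hCeq ▸ ih.1)
        have hghi := Finset.mem_Icc.mp (hCeq ▸ ih.2)
        have hone : f'.lo ∈ C ∨ f'.hi ∈ C := by
          rcases hint with (h | h | h | h) | (⟨h1', h2', h3'⟩ | ⟨h1', h2', h3'⟩)
          · exact Or.inl (h ▸ ih.1)
          · exact Or.inr (h ▸ ih.1)
          · exact Or.inl (h ▸ ih.2)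
          · exact Or.inr (h ▸ ih.2)
          · exact Or.inl (hmemC _ (le_trans hglo.1 (le_of_lt h1')) (le_trans (le_of_lt h2') hghi.2))
          · exact Or.inr (hmemC _ (le_trans hglo.1 (le_of_lt h2')) (le_trans (le_of_lt h3') hghi.2))
        rcases hone with h | h
        · exact ⟨h, (hiff f' hf'S).mp h⟩
        · exact ⟨(hiff f' hf'S).mpr h, h⟩
    have hUC : ∀ u ∈ linkVerts S, u ∈ C := by
      rintro u ⟨ℓ, hℓS, hinc⟩
      have := hchain ℓ (hconn ℓ1 hℓ1S ℓ hℓS)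
      rcases hinc with h | h
      · exact h ▸ this.1
      · exact h ▸ this.2
    have hsub := responsible_sub_desc hF hdF hresp
    have hcommon : ∀ u ∈ linkVerts S, Descend F d.head u := fun u hu => hsub u (hUC u hu)
    have h1 : Descend F d.head w := hw.2 _ hcommon
    have h2 : Descend F w d.head := by
      rcases hinc1 with h | h
      · exact h ▸ hw.1 ℓ1.lo ⟨ℓ1, hℓ1S, Or.inl rfl⟩
      · exact h ▸ hw.1 ℓ1.hi ⟨ℓ1, hℓ1S, Or.inr rfl⟩
    exact hvw (descend_antisymm hF h1 h2)
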